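/- With A_j = ∂P_j as above, for every i and r ≥ 1 one has A_i ∩ A_{i+1} ∩ ... ∩ A_{i+r−1} = A_i ∩ A_{i+r−1}; explicitly, this common set equals {Q : i^-(Q) ≤ i and Q is a limit of symmetric matrices Q_n with i^-(Q_n) ≥ i+r}. -/

import Mathlib

open Matrix Filter

/-- The negative inertia index of a real matrix. -/
noncomputable def negIndex {n : ℕ} (Q : Matrix (Fin n) (Fin n) ℝ) : ℕ :=
  sSup {d : ℕ | ∃ W : Submodule ℝ (Fin n → ℝ), Module.finrank ℝ W = d ∧
    ∀ x ∈ W, x ≠ 0 → x ⬝ᵥ Q.mulVec x < 0}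

/-- The space of real symmetric `n×n` matrices with its natural topology. -/
abbrev SymMat (n : ℕ) : Type := {Q : Matrix (Fin n) (Fin n) ℝ // Q.IsSymm}

/-- `A_j` is the topological boundary in `Sym_n(ℝ)` of `P_j = {Q : i⁻(Q) ≤ j}`. -/
noncomputable def Aj (n j : ℕ) : Set (SymMat n) :=
  frontier {Q : SymMat n | negIndex Q.1 ≤ j}

/-- `Q` satisfies property `s(l)` if it is a limit of symmetric matrices with `i⁻ ≥ l`. -/
def propS {n : ℕ} (Q : SymMat n) (l : ℕ) : Prop :=
  ∃ Qs : ℕ → SymMat n, Tendsto Qs atTop (nhds Q) ∧ ∀ m, l ≤ negIndex (Qs m).1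

namespace AuxNeg

instance matFC (n : ℕ) :
    FirstCountableTopology (Matrix (Fin n) (Fin n) ℝ) :=
  inferInstanceAs (FirstCountableTopology (Fin n → Fin n → ℝ))

variable {n : ℕ}

def negSet (Q : Matrix (Fin n) (Fin n) ℝ) : Set ℕ :=
  {d : ℕ | ∃ W : Submodule ℝ (Fin n → ℝ), Module.finrank ℝ W = d ∧
    ∀ x ∈ W, x ≠ 0 → x ⬝ᵥ Q.mulVec x < 0}

lemma negIndex_eq (Q : Matrix (Fin n) (Fin n) ℝ) : negIndex Q = sSup (negSet Q) := rfl

lemma zero_mem_negSet (Q : Matrix (Fin n) (Fin n) ℝ) : 0 ∈ negSet Q := by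
  refine ⟨⊥, finrank_bot ℝ _, fun x hx hx0 => ?_⟩
  exact absurd (Submodule.mem_bot ℝ |>.mp hx) hx0

lemma negSet_le (Q : Matrix (Fin n) (Fin n) ℝ) {d : ℕ} (hd : d ∈ negSet Q) : d ≤ n := by
  obtain ⟨W, hW, -⟩ := hd
  have := Submodule.finrank_le W
  simpa [hW, Module.finrank_fin_fun] using this

lemma bddAbove_negSet (Q : Matrix (Fin n) (Fin n) ℝ) : BddAbove (negSet Q) :=
  ⟨n, fun _ hd => negSet_le Q hd⟩

lemma negIndex_mem (Q : Matrix (Fin n) (Fin n) ℝ) : negIndex Q ∈ negSet Q :=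
  Nat.sSup_mem ⟨0, zero_mem_negSet Q⟩ (bddAbove_negSet Q)

lemma le_negIndex (Q : Matrix (Fin n) (Fin n) ℝ) {d : ℕ} (hd : d ∈ negSet Q) :
    d ≤ negIndex Q :=
  le_csSup (bddAbove_negSet Q) hd

/-- Quadratic form bound: if `‖x‖ ≤ 1` (sup norm) then
`|x ⬝ᵥ M.mulVec x| ≤ ∑ |M a b|`. -/
lemma quad_bound (M : Matrix (Fin n) (Fin n) ℝ) (x : Fin n → ℝ) (hx : ∀ a, |x a| ≤ 1) :
    |x ⬝ᵥ M.mulVec x| ≤ ∑ a : Fin n, ∑ b : Fin n, |M a b| := by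
  simp only [dotProduct, Matrix.mulVec, dotProduct]
  calc |∑ a : Fin n, x a * ∑ b : Fin n, M a b * x b|
      ≤ ∑ a : Fin n, |x a * ∑ b : Fin n, M a b * x b| := Finset.abs_sum_le_sum_abs _ _
    _ ≤ ∑ a : Fin n, ∑ b : Fin n, |M a b| := by
        apply Finset.sum_le_sum
        intro a _
        rw [abs_mul]
        calc |x a| * |∑ b : Fin n, M a b * x b|
            ≤ 1 * |∑ b : Fin n, M a b * x b| := by
              apply mul_le_mul_of_nonneg_right (hx a) (abs_nonneg _)
          _ = |∑ b : Fin n, M a b * x b| := one_mul _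
          _ ≤ ∑ b : Fin n, |M a b * x b| := Finset.abs_sum_le_sum_abs _ _
          _ ≤ ∑ b : Fin n, |M a b| := by
              apply Finset.sum_le_sum
              intro b _
              rw [abs_mul]
              calc |M a b| * |x b| ≤ |M a b| * 1 :=
                    mul_le_mul_of_nonneg_left (hx b) (abs_nonneg _)
                _ = |M a b| := mul_one _

lemma quad_continuous (Q : Matrix (Fin n) (Fin n) ℝ) :
    Continuous fun x : Fin n → ℝ => x ⬝ᵥ Q.mulVec x := by
  simp only [dotProduct, Matrix.mulVec, dotProduct]
  exact continuous_finset_sum _ fun a _ => (continuous_apply a).mul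
    (continuous_finset_sum _ fun b _ => continuous_const.mul (continuous_apply b))

/-- Uniform negativity: a negative-definite subspace stays negative definite under small
entrywise perturbations. -/
lemma exists_eps (Q : Matrix (Fin n) (Fin n) ℝ) (W : Submodule ℝ (Fin n → ℝ))
    (hW : ∀ x ∈ W, x ≠ 0 → x ⬝ᵥ Q.mulVec x < 0) :
    ∃ ε : ℝ, 0 < ε ∧ ∀ Q' : Matrix (Fin n) (Fin n) ℝ,
      (∀ a b, |Q' a b - Q a b| < ε) → ∀ x ∈ W, x ≠ 0 → x ⬝ᵥ Q'.mulVec x < 0 := by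
  by_cases hWtriv : ∀ x ∈ W, x = 0
  · exact ⟨1, one_pos, fun Q' _ x hx hx0 => absurd (hWtriv x hx) hx0⟩
  push_neg at hWtriv
  obtain ⟨y, hyW, hy0⟩ := hWtriv
  -- the unit sphere of W
  set S : Set (Fin n → ℝ) := Metric.sphere 0 1 ∩ (W : Set (Fin n → ℝ)) with hS
  have hScl : IsClosed (W : Set (Fin n → ℝ)) := Submodule.closed_of_finiteDimensional W
  have hScomp : IsCompact S := (isCompact_sphere (0 : Fin n → ℝ) 1).inter_right hScl
  have hSne : S.Nonempty := by
    refine ⟨‖y‖⁻¹ • y, ?_, Submodule.smul_mem W _ hyW⟩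
    simp [norm_smul, norm_ne_zero_iff.mpr hy0, inv_mul_cancel₀ (norm_ne_zero_iff.mpr hy0)]
  obtain ⟨x0, hx0S, hx0max⟩ := hScomp.exists_isMaxOn hSne (quad_continuous Q).continuousOn
  have hx0ne : x0 ≠ 0 := by
    intro h
    have := hx0S.1
    rw [h] at this
    simp at this
  have hc : x0 ⬝ᵥ Q.mulVec x0 < 0 := hW x0 hx0S.2 hx0ne
  set c : ℝ := -(x0 ⬝ᵥ Q.mulVec x0) with hcdef
  have hcpos : 0 < c := by simpa [hcdef] using hc
  refine ⟨c / ((n : ℝ) ^ 2 + 1), div_pos hcpos (by positivity), fun Q' hQ' x hxW hxne => ?_⟩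
  -- first prove it for unit vectors of W
  have key : ∀ u ∈ W, ‖u‖ = 1 → u ⬝ᵥ Q'.mulVec u < 0 := by
    intro u huW hu1
    have huS : u ∈ S := ⟨by simpa using hu1, huW⟩
    have hmax : u ⬝ᵥ Q.mulVec u ≤ -c := by
      have := hx0max huS
      simpa [hcdef] using this
    have hub : ∀ a, |u a| ≤ 1 := by
      intro a
      have := norm_le_pi_norm u a
      rw [hu1] at this
      simpa using this
    have hdiff : |u ⬝ᵥ (Q' - Q).mulVec u| ≤ ∑ a : Fin n, ∑ b : Fin n, |(Q' - Q) a b| :=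
      quad_bound _ u hub
    have hsum : ∑ a : Fin n, ∑ b : Fin n, |(Q' - Q) a b| ≤ (n : ℝ) ^ 2 * (c / ((n : ℝ) ^ 2 + 1)) := by
      calc ∑ a : Fin n, ∑ b : Fin n, |(Q' - Q) a b|
          ≤ ∑ _a : Fin n, ∑ _b : Fin n, (c / ((n : ℝ) ^ 2 + 1)) := by
            apply Finset.sum_le_sum; intro a _
            apply Finset.sum_le_sum; intro b _
            have := hQ' a b
            simp only [Matrix.sub_apply]
            exact le_of_lt this
        _ = (n : ℝ) ^ 2 * (c / ((n : ℝ) ^ 2 + 1)) := by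
            simp [Finset.sum_const, Finset.card_univ]; ring
    have hsplit : u ⬝ᵥ Q'.mulVec u = u ⬝ᵥ Q.mulVec u + u ⬝ᵥ (Q' - Q).mulVec u := by
      rw [Matrix.sub_mulVec, dotProduct_sub]; ring
    have hlt : (n : ℝ) ^ 2 * (c / ((n : ℝ) ^ 2 + 1)) < c := by
      have h0 : (0:ℝ) < (n : ℝ) ^ 2 + 1 := by positivity
      rw [← mul_div_assoc, div_lt_iff₀ h0]
      nlinarith
    calc u ⬝ᵥ Q'.mulVec u = u ⬝ᵥ Q.mulVec u + u ⬝ᵥ (Q' - Q).mulVec u := hsplit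
      _ ≤ -c + |u ⬝ᵥ (Q' - Q).mulVec u| := by
          have := le_abs_self (u ⬝ᵥ (Q' - Q).mulVec u)
          linarith
      _ ≤ -c + (n : ℝ) ^ 2 * (c / ((n : ℝ) ^ 2 + 1)) := by linarith [hdiff.trans hsum]
      _ < -c + c := by linarith
      _ = 0 := by ring
  -- now scale
  have hxnorm : ‖x‖ ≠ 0 := norm_ne_zero_iff.mpr hxne
  set u : Fin n → ℝ := ‖x‖⁻¹ • x with hu
  have huW : u ∈ W := Submodule.smul_mem W _ hxW
  have hu1 : ‖u‖ = 1 := by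
    rw [hu, norm_smul]
    simp [abs_of_nonneg (inv_nonneg.mpr (norm_nonneg x)), inv_mul_cancel₀ hxnorm]
  have hneg : u ⬝ᵥ Q'.mulVec u < 0 := key u huW hu1
  have hx_eq : x = ‖x‖ • u := by
    rw [hu, smul_smul, mul_inv_cancel₀ hxnorm, one_smul]
  calc x ⬝ᵥ Q'.mulVec x = ‖x‖ * (‖x‖ * (u ⬝ᵥ Q'.mulVec u)) := by
        conv_lhs => rw [hx_eq]
        rw [Matrix.mulVec_smul, smul_dotProduct, dotProduct_smul]
        simp [smul_eq_mul]
    _ < 0 := by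
        have h1 : 0 < ‖x‖ := lt_of_le_of_ne (norm_nonneg x) (Ne.symm hxnorm)
        have := mul_neg_of_pos_of_neg h1 hneg
        exact mul_neg_of_pos_of_neg h1 this

/-- `{Q | j < negIndex Q}` is open in `SymMat n`. -/
lemma isOpen_gt (j : ℕ) : IsOpen {Q : SymMat n | j < negIndex Q.1} := by
  rw [isOpen_iff_mem_nhds]
  rintro Q hQ
  obtain ⟨W, hWrank, hWneg⟩ := negIndex_mem Q.1
  obtain ⟨ε, hε, hball⟩ := exists_eps Q.1 W hWneg
  have hopen : IsOpen {Q' : SymMat n | ∀ a b, |Q'.1 a b - Q.1 a b| < ε} := by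
    have : {Q' : SymMat n | ∀ a b, |Q'.1 a b - Q.1 a b| < ε} =
        ⋂ a : Fin n, ⋂ b : Fin n, {Q' : SymMat n | |Q'.1 a b - Q.1 a b| < ε} := by
      ext Q'; simp [Set.mem_iInter]
    rw [this]
    refine isOpen_iInter_of_finite fun a => isOpen_iInter_of_finite fun b => ?_
    have hcont1 : Continuous fun Q' : SymMat n => Q'.1 a b := by
      have h1 : Continuous fun M : Matrix (Fin n) (Fin n) ℝ => M a b :=
        (continuous_apply b).comp (continuous_apply (A := fun _ : Fin n => Fin n → ℝ) a)
      exact h1.comp continuous_subtype_val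
    have hcont : Continuous fun Q' : SymMat n => |Q'.1 a b - Q.1 a b| :=
      (hcont1.sub continuous_const).abs
    exact isOpen_lt hcont continuous_const
  have hmem : Q ∈ {Q' : SymMat n | ∀ a b, |Q'.1 a b - Q.1 a b| < ε} := by
    intro a b; simpa using hε
  refine Filter.mem_of_superset (hopen.mem_nhds hmem) ?_
  intro Q' hQ'
  have : negIndex Q.1 ∈ negSet Q'.1 := ⟨W, hWrank, hball Q'.1 hQ'⟩
  exact lt_of_lt_of_le hQ (le_negIndex _ this)

lemma isClosed_Pj (j : ℕ) : IsClosed {Q : SymMat n | negIndex Q.1 ≤ j} := by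
  have : {Q : SymMat n | negIndex Q.1 ≤ j} = {Q : SymMat n | j < negIndex Q.1}ᶜ := by
    ext Q; simp [not_lt]
  rw [this]
  exact (isOpen_gt j).isClosed_compl

/-- Characterization of `A_j`. -/
lemma Aj_eq (n j : ℕ) :
    Aj n j = {Q : SymMat n | negIndex Q.1 ≤ j ∧ propS Q (j + 1)} := by
  ext Q
  rw [Aj, frontier_eq_closure_inter_closure, (isClosed_Pj j).closure_eq]
  simp only [Set.mem_inter_iff, Set.mem_setOf_eq]
  constructor
  · rintro ⟨h1, h2⟩
    refine ⟨h1, ?_⟩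
    rw [mem_closure_iff_seq_limit] at h2
    obtain ⟨Qs, hQs, hlim⟩ := h2
    exact ⟨Qs, hlim, fun m => by
      have := hQs m
      simp only [Set.mem_compl_iff, Set.mem_setOf_eq, not_le] at this
      omega⟩
  · rintro ⟨h1, Qs, hlim, hge⟩
    refine ⟨h1, ?_⟩
    rw [mem_closure_iff_seq_limit]
    exact ⟨Qs, fun m => by
      simp only [Set.mem_compl_iff, Set.mem_setOf_eq, not_le]
      have := hge m; omega, hlim⟩

lemma propS_mono {Q : SymMat n} {k l : ℕ} (h : propS Q l) (hkl : k ≤ l) : propS Q k := by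
  obtain ⟨Qs, hlim, hge⟩ := h
  exact ⟨Qs, hlim, fun m => le_trans hkl (hge m)⟩

end AuxNeg

open AuxNeg in
/-- For every `i` and `r ≥ 1`, `A_i ∩ A_{i+1} ∩ ⋯ ∩ A_{i+r−1} = A_i ∩ A_{i+r−1}`, and
this common set equals `{Q : i⁻(Q) ≤ i and Q is a limit of symmetric matrices with i⁻ ≥ i+r}`. -/
theorem inter_consecutive_Aj (n i r : ℕ) (hr : 1 ≤ r) :
    (⋂ j ∈ Finset.Icc i (i + r - 1), Aj n j) = Aj n i ∩ Aj n (i + r - 1) ∧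
    (⋂ j ∈ Finset.Icc i (i + r - 1), Aj n j) =
      {Q : SymMat n | negIndex Q.1 ≤ i ∧ propS Q (i + r)} := by
  have hi_mem : i ∈ Finset.Icc i (i + r - 1) := by
    rw [Finset.mem_Icc]; omega
  have hend_mem : i + r - 1 ∈ Finset.Icc i (i + r - 1) := by
    rw [Finset.mem_Icc]; omega
  have h2 : (⋂ j ∈ Finset.Icc i (i + r - 1), Aj n j) =
      {Q : SymMat n | negIndex Q.1 ≤ i ∧ propS Q (i + r)} := by
    ext Q
    simp only [Set.mem_iInter, Set.mem_setOf_eq, Aj_eq]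
    constructor
    · intro h
      have h1 := h i hi_mem
      have h2 := h (i + r - 1) hend_mem
      refine ⟨h1.1, ?_⟩
      have : i + r - 1 + 1 = i + r := by omega
      rw [this] at h2
      exact h2.2
    · rintro ⟨h1, h2⟩ j hj
      rw [Finset.mem_Icc] at hj
      exact ⟨le_trans h1 hj.1, propS_mono h2 (by omega)⟩
  refine ⟨?_, h2⟩
  apply Set.Subset.antisymm
  · intro Q hQ
    rw [Set.mem_iInter] at hQ
    exact ⟨by have := hQ i; simp only [Set.mem_iInter] at this; exact this hi_mem,
      by have := hQ (i + r - 1); simp only [Set.mem_iInter] at this; exact this hend_mem⟩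
  · rw [h2]
    rintro Q ⟨hQ1, hQ2⟩
    simp only [Aj_eq, Set.mem_setOf_eq] at hQ1 hQ2 ⊢
    exact ⟨hQ1.1, propS_mono hQ2.2 (by omega)⟩
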